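/- Let m be a positive integer and let k = (k_0, k_1, ..., k_d) be a tuple of natural numbers (d ≥ 1) such that k_0 + k_1 + ... + k_d = m and 0·k_0 + 1·k_1 + ... + d·k_d = m - 1. Then the multinomial coefficient m!/(k_0! k_1! ⋯ k_d!) is divisible by m; that is, (1/m)·(m!/(k_0!⋯k_d!)) is a natural number. -/

import Mathlib

/-- Key step: `k j * multinomial k = m * multinomial (update k j (k j - 1))`,
hence `m ∣ k j * multinomial k`. -/
lemma m_dvd_kj_mul_multinomial {n : ℕ} (m : ℕ) (k : Fin n → ℕ)
    (h1 : ∑ j, k j = m) (j : Fin n) :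
    m ∣ k j * Nat.multinomial Finset.univ k := by
  rcases Nat.eq_zero_or_pos (k j) with hj | hj
  · simp [hj]
  set k' : Fin n → ℕ := Function.update k j (k j - 1) with hk'
  have h1' : k j + ∑ i ∈ Finset.univ \ {j}, k i = m := by
    rw [← Finset.erase_eq, Finset.add_sum_erase _ _ (Finset.mem_univ j)]; exact h1
  have hsum' : ∑ i, k' i = m - 1 := by
    rw [hk', Finset.sum_update_of_mem (Finset.mem_univ j)]
    omega
  have hprod : ∏ i, Nat.factorial (k i) = k j * ∏ i, Nat.factorial (k' i) := by
    rw [← Finset.mul_prod_erase _ _ (Finset.mem_univ j),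
      ← Finset.mul_prod_erase _ (fun i => Nat.factorial (k' i)) (Finset.mem_univ j)]
    have e1 : ∀ i ∈ Finset.univ.erase j, Nat.factorial (k i) = Nat.factorial (k' i) := by
      intro i hi
      rw [hk', Function.update_of_ne (Finset.ne_of_mem_erase hi)]
    rw [Finset.prod_congr rfl e1, hk', Function.update_self, ← mul_assoc]
    congr 1
    exact (Nat.mul_factorial_pred hj.ne').symm
  have hm1 : 1 ≤ m := by omega
  have spec := Nat.multinomial_spec Finset.univ k
  have spec' := Nat.multinomial_spec Finset.univ k'
  rw [h1] at spec
  rw [hsum'] at spec'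
  have key : k j * Nat.multinomial Finset.univ k = m * Nat.multinomial Finset.univ k' := by
    have hP : 0 < ∏ i, Nat.factorial (k' i) := Finset.prod_pos fun i _ => Nat.factorial_pos _
    apply Nat.eq_of_mul_eq_mul_left hP
    calc (∏ i, Nat.factorial (k' i)) * (k j * Nat.multinomial Finset.univ k)
        = (∏ i, Nat.factorial (k i)) * Nat.multinomial Finset.univ k := by rw [hprod]; ring
      _ = Nat.factorial m := spec
      _ = m * Nat.factorial (m - 1) := (Nat.mul_factorial_pred (Nat.one_le_iff_ne_zero.mp hm1)).symm
      _ = (∏ i, Nat.factorial (k' i)) * (m * Nat.multinomial Finset.univ k') := by rw [← spec']; ring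
  rw [key]; exact Dvd.intro _ rfl

/-- If `k = (k_0, …, k_d)` (with `d ≥ 1`) is a tuple of natural numbers with
`∑ k_j = m ≥ 1` and `∑ j·k_j = m - 1`, then `m` divides the multinomial
coefficient `m! / (k_0! ⋯ k_d!)`. -/
theorem m_dvd_multinomial (m d : ℕ) (hm : 1 ≤ m) (hd : 1 ≤ d) (k : Fin (d + 1) → ℕ)
    (h1 : ∑ j, k j = m) (h2 : ∑ j : Fin (d + 1), (j : ℕ) * k j = m - 1) :
    m ∣ Nat.multinomial Finset.univ k := by
  set M := Nat.multinomial Finset.univ k with hM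
  have hdvd : ∀ j : Fin (d + 1), (m : ℤ) ∣ (k j : ℤ) * M := fun j => by
    exact_mod_cast Int.natCast_dvd_natCast.mpr (m_dvd_kj_mul_multinomial m k h1 j)
  have hcomb : (M : ℤ) = ∑ j : Fin (d + 1), (1 - (j : ℕ) : ℤ) * ((k j : ℤ) * M) := by
    have : ∑ j : Fin (d + 1), (1 - (j : ℕ) : ℤ) * (k j : ℤ) = 1 := by
      have e1 : ∑ j : Fin (d + 1), ((k j : ℤ)) = (m : ℤ) := by exact_mod_cast h1
      have e2 : ∑ j : Fin (d + 1), ((j : ℕ) : ℤ) * (k j : ℤ) = ((m - 1 : ℕ) : ℤ) := by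
        exact_mod_cast h2
      have : ∑ j : Fin (d + 1), (1 - (j : ℕ) : ℤ) * (k j : ℤ)
          = (∑ j : Fin (d + 1), ((k j : ℤ))) - ∑ j : Fin (d + 1), ((j : ℕ) : ℤ) * (k j : ℤ) := by
        rw [← Finset.sum_sub_distrib]
        congr 1; ext j; ring
      rw [this, e1, e2]
      omega
    calc (M : ℤ) = (∑ j : Fin (d + 1), (1 - (j : ℕ) : ℤ) * (k j : ℤ)) * M := by rw [this]; ring
      _ = ∑ j : Fin (d + 1), (1 - (j : ℕ) : ℤ) * ((k j : ℤ) * M) := by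
          rw [Finset.sum_mul]; congr 1; ext j; ring
  have : (m : ℤ) ∣ (M : ℤ) := by
    rw [hcomb]
    exact Finset.dvd_sum fun j _ => Dvd.dvd.mul_left (hdvd j) _
  exact_mod_cast this
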